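/- arXiv:math/0701629 — 5 statements merged into one kernel-verified Lean document; each statement's English description precedes it below -/
import Mathlib

section
/- Let v, r, k, b be positive integers with v·r = k·b and gcd(v, r) = 1. Then k = gcd(k,v) · gcd(k,r), b = gcd(b,v) · gcd(b,r), v = gcd(b,v) · gcd(k,v), and r = gcd(b,r) · gcd(k,r). -/
theorem stmt_2 (v r k b : ℕ) (hv : 0 < v) (hr : 0 < r) (hk : 0 < k) (hb : 0 < b)
    (h1 : v * r = k * b) (h2 : Nat.gcd v r = 1) :
    k = Nat.gcd k v * Nat.gcd k r ∧
    b = Nat.gcd b v * Nat.gcd b r ∧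
    v = Nat.gcd b v * Nat.gcd k v ∧
    r = Nat.gcd b r * Nat.gcd k r := by
  have hco : Nat.Coprime v r := h2
  have hkvr : k ∣ v * r := h1 ▸ Dvd.intro b rfl
  have hbvr : b ∣ v * r := h1 ▸ Dvd.intro_left k rfl
  have hkfact : k = Nat.gcd k v * Nat.gcd k r := by
    have := Nat.Coprime.gcd_mul k hco
    rwa [Nat.gcd_eq_left hkvr] at this
  have hbfact : b = Nat.gcd b v * Nat.gcd b r := by
    have := Nat.Coprime.gcd_mul b hco
    rwa [Nat.gcd_eq_left hbvr] at this
  set a := Nat.gcd b v * Nat.gcd k v with ha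
  set c := Nat.gcd b r * Nat.gcd k r with hc
  have hprod : a * c = v * r := by
    rw [h1, hkfact, hbfact]; ring
  have hacop : Nat.Coprime a r :=
    Nat.Coprime.mul
      (Nat.Coprime.coprime_dvd_left (Nat.gcd_dvd_right b v) hco)
      (Nat.Coprime.coprime_dvd_left (Nat.gcd_dvd_right k v) hco)
  have hccop : Nat.Coprime c v :=
    Nat.Coprime.mul
      (Nat.Coprime.coprime_dvd_left (Nat.gcd_dvd_right b r) hco.symm)
      (Nat.Coprime.coprime_dvd_left (Nat.gcd_dvd_right k r) hco.symm)
  have hav : a ∣ v :=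
    Nat.Coprime.dvd_of_dvd_mul_right hacop ⟨c, hprod.symm⟩
  have hcr : c ∣ r :=
    Nat.Coprime.dvd_of_dvd_mul_left hccop ⟨a, by rw [← hprod]; ring⟩
  have hapos : 0 < a := Nat.mul_pos (Nat.gcd_pos_of_pos_right b hv) (Nat.gcd_pos_of_pos_right k hv)
  have hcpos : 0 < c := Nat.mul_pos (Nat.gcd_pos_of_pos_right b hr) (Nat.gcd_pos_of_pos_right k hr)
  obtain ⟨m, hm⟩ := hav
  obtain ⟨n, hn⟩ := hcr
  have hmn : m * n = 1 := by
    have h' : a * c * 1 = a * c * (m * n) := by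
      calc a * c * 1 = v * r := by rw [Nat.mul_one, hprod]
        _ = (a * m) * (c * n) := by rw [← hm, ← hn]
        _ = a * c * (m * n) := by ring
    exact (Nat.eq_of_mul_eq_mul_left (Nat.mul_pos hapos hcpos) h').symm
  have hm1 : m = 1 := Nat.dvd_one.mp ⟨n, hmn.symm⟩
  have hn1 : n = 1 := Nat.dvd_one.mp ⟨m, by rw [← hmn]; ring⟩
  refine ⟨hkfact, hbfact, ?_, ?_⟩
  · rw [hm, hm1, Nat.mul_one]
  · rw [hn, hn1, Nat.mul_one]
end

section
/- Let k, c, d, x, y, r be positive integers with y·c = (k choose 2) - x, x·d = (k choose 2) - y, and c·d - 1 = r·(k-1). Then 2·x·y·r = k·((k choose 2) - x - y); equivalently r/k = ((k choose 2) - x - y)/(2xy). Moreover c = 2xr/k + 1 and d = 2yr/k + 1. -/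
theorem stmt_5 (k c d x y r : ℕ) (hk : 0 < k) (hc : 0 < c) (hd : 0 < d)
    (hx : 0 < x) (hy : 0 < y) (hr : 0 < r)
    (hx' : x ≤ Nat.choose k 2) (hy' : y ≤ Nat.choose k 2)
    (h1 : y * c = Nat.choose k 2 - x) (h2 : x * d = Nat.choose k 2 - y)
    (h3 : c * d - 1 = r * (k - 1)) :
    2 * x * y * r = k * (Nat.choose k 2 - x - y) ∧
    c * k = 2 * x * r + k ∧
    d * k = 2 * y * r + k := by
  set n := Nat.choose k 2 with hn
  -- k ≥ 2
  have hk2 : 2 ≤ k := by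
    by_contra h
    push_neg at h
    have : n = 0 := Nat.choose_eq_zero_of_lt h
    omega
  -- 2n = k(k-1)
  have hn2 : 2 * n = k * (k - 1) := by
    rw [hn, Nat.choose_two_right, Nat.mul_div_cancel']
    obtain ⟨m, rfl⟩ : ∃ m, k = m + 1 := ⟨k - 1, by omega⟩
    simpa [mul_comm] using (Nat.even_mul_succ_self m).two_dvd
  -- x + y ≤ n
  have hyc : y ≤ y * c := Nat.le_mul_of_pos_right y hc
  have hxd : x ≤ x * d := Nat.le_mul_of_pos_right x hd
  have hxy : x + y ≤ n := by omega
  have hcd : 1 ≤ c * d := Nat.one_le_iff_ne_zero.mpr (by positivity)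
  -- move to ℤ
  have A : (y : ℤ) * c = (n : ℤ) - x := by
    have := h1; zify [hx'] at this; linarith
  have B : (x : ℤ) * d = (n : ℤ) - y := by
    have := h2; zify [hy'] at this; linarith
  have C : (c : ℤ) * d - 1 = (r : ℤ) * ((k : ℤ) - 1) := by
    have := h3
    zify [hcd, hk] at this
    linarith
  have D : 2 * (n : ℤ) = (k : ℤ) * ((k : ℤ) - 1) := by
    have := hn2; zify [hk] at this
    linarith
  have hAB : ((y : ℤ) * c) * ((x : ℤ) * d) = ((n : ℤ) - x) * ((n : ℤ) - y) := by
    rw [A, B]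
  have hkne : ((k : ℤ) - 1) ≠ 0 := by
    have : (2 : ℤ) ≤ k := by exact_mod_cast hk2
    linarith
  have E1 : (2 * (x : ℤ) * y * r) * ((k : ℤ) - 1)
      = ((k : ℤ) * ((n : ℤ) - x - y)) * ((k : ℤ) - 1) := by
    linear_combination (-2) * (x : ℤ) * y * C + 2 * hAB + ((n : ℤ) - x - y) * D
  have G1 : 2 * (x : ℤ) * y * r = (k : ℤ) * ((n : ℤ) - x - y) :=
    mul_right_cancel₀ hkne E1
  have hyne : (y : ℤ) ≠ 0 := by exact_mod_cast hy.ne'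
  have hxne : (x : ℤ) ≠ 0 := by exact_mod_cast hx.ne'
  have G2 : (c : ℤ) * k = 2 * x * r + k := by
    have : ((c : ℤ) * k) * y = (2 * (x : ℤ) * r + k) * y := by
      linear_combination (k : ℤ) * A - G1
    exact mul_right_cancel₀ hyne this
  have G3 : (d : ℤ) * k = 2 * y * r + k := by
    have : ((d : ℤ) * k) * x = (2 * (y : ℤ) * r + k) * x := by
      linear_combination (k : ℤ) * B - G1
    exact mul_right_cancel₀ hxne this
  refine ⟨?_, ?_, ?_⟩
  · zify [hx', show y ≤ n - x by omega]; linarith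
  · exact_mod_cast G2
  · exact_mod_cast G3
end

section
/- There do not exist positive integers v, d, c, r, k, h with d ≥ 2, h ≥ 2, k ≥ 2, v = d·c, v - 1 = r·(k - 1), c = r·(h - 1) + 1 and r ≥ k. -/
theorem stmt_10 :
    ¬ ∃ v d c r k h : ℕ, 0 < v ∧ 0 < c ∧ 0 < r ∧ 2 ≤ d ∧ 2 ≤ h ∧ 2 ≤ k ∧
      v = d * c ∧ v - 1 = r * (k - 1) ∧ c = r * (h - 1) + 1 ∧ k ≤ r := by
  rintro ⟨v, d, c, r, k, h, hv, hc, hr, hd, hh, hk, hvdc, hv1, hcr, hkr⟩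
  obtain ⟨a, rfl⟩ : ∃ a, h = a + 2 := ⟨h - 2, by omega⟩
  obtain ⟨b, rfl⟩ : ∃ b, k = b + 2 := ⟨k - 2, by omega⟩
  have hb1 : b + 2 - 1 = b + 1 := by omega
  have ha1 : a + 2 - 1 = a + 1 := by omega
  rw [hb1] at hv1
  rw [ha1] at hcr
  have hveq : v = r * (b + 1) + 1 := by omega
  have hceq : c = r * (a + 1) + 1 := by omega
  have hmain : d * (r * (a + 1) + 1) = r * (b + 1) + 1 := by
    rw [← hceq, ← hvdc, hveq]
  -- r divides d - 1 (in ℤ)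
  have key : (d : ℤ) - 1 = (r : ℤ) * ((b + 1) - d * (a + 1)) := by
    have := congrArg (fun n : ℕ => (n : ℤ)) hmain
    push_cast at this
    ring_nf
    ring_nf at this
    linarith
  have hdvd : (r : ℤ) ∣ (d : ℤ) - 1 := ⟨_, key⟩
  have hrd : (r : ℤ) ≤ (d : ℤ) - 1 := by
    apply Int.le_of_dvd _ hdvd
    have : (2 : ℤ) ≤ d := by exact_mod_cast hd
    linarith
  have hbr : (b : ℤ) + 2 ≤ r := by exact_mod_cast hkr
  have hmainZ : (d : ℤ) * (r * (a + 1) + 1) = r * (b + 1) + 1 := by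
    exact_mod_cast hmain
  nlinarith [hmainZ, hrd, hbr, sq_nonneg ((r : ℤ)), Int.natCast_nonneg a, Int.natCast_nonneg r]
end

section
/- Let G act transitively on a finite set X, let N be a normal subgroup of G, and let α ∈ X. Then the fixed-point set Fix_X(N_α) of the point stabiliser N_α is a block of imprimitivity for G, and the normaliser N_G(N_α) acts transitively on Fix_X(N_α). -/
open Pointwise

theorem stmt_13 {G X : Type*} [Group G] [Fintype X] [MulAction G X]
    (htrans : MulAction.IsPretransitive G X)
    (N : Subgroup G) (hN : N.Normal) (α : X)
    (F : Set X) (hF : F = {x : X | ∀ n : G, n ∈ N → n • α = α → n • x = x}) :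
    (∀ g : G, g • F = F ∨ Disjoint (g • F) F) ∧
    (∀ x ∈ F, ∀ y ∈ F, ∃ g ∈ Subgroup.normalizer ((N ⊓ MulAction.stabilizer G α : Subgroup G) : Set G), g • x = y) := by
  set K := N ⊓ MulAction.stabilizer G α with hK
  have hmemK : ∀ n : G, n ∈ K ↔ n ∈ N ∧ n • α = α := by
    intro n
    rw [hK, Subgroup.mem_inf, MulAction.mem_stabilizer_iff]
  have hmemF : ∀ x : X, x ∈ F ↔ ∀ n ∈ K, n • x = x := by
    intro x
    rw [hF]
    constructor
    · intro h n hn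
      exact h n ((hmemK n).mp hn).1 ((hmemK n).mp hn).2
    · intro h n hn1 hn2
      exact h n ((hmemK n).mpr ⟨hn1, hn2⟩)
  have hαF : α ∈ F := (hmemF α).mpr (fun n hn => ((hmemK n).mp hn).2)
  -- Key lemma: any h sending α into F normalizes K
  have hnorm : ∀ h : G, h • α ∈ F → h ∈ (Subgroup.normalizer (K : Set G)) := by
    intro h hβ
    have hB : ∀ n ∈ K, h⁻¹ * n * h ∈ K := by
      intro n hn
      obtain ⟨hnN, hnα⟩ := (hmemK n).mp hn
      refine (hmemK _).mpr ⟨?_, ?_⟩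
      · have := hN.conj_mem n hnN h⁻¹
        simpa using this
      · have hfix : n • (h • α) = h • α := (hmemF _).mp hβ n hn
        rw [mul_smul, mul_smul, hfix]
        simp
    have hC : ∀ k : ℕ, ∀ n ∈ K, (h ^ k)⁻¹ * n * h ^ k ∈ K := by
      intro k
      induction k with
      | zero => simp
      | succ k ih =>
        intro n hn
        have h2 := hB _ (ih n hn)
        have heq : h⁻¹ * ((h ^ k)⁻¹ * n * h ^ k) * h = (h ^ (k + 1))⁻¹ * n * h ^ (k + 1) := by
          rw [pow_succ]
          group
        rwa [heq] at h2
    -- find m ≥ 1 with h^m • α = α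
    obtain ⟨i, j, hij, heq⟩ := Finite.exists_ne_map_eq_of_infinite (fun k : ℕ => h ^ k • α)
    have hmain : ∀ i j : ℕ, i < j → h ^ i • α = h ^ j • α → ∃ m : ℕ, 1 ≤ m ∧ h ^ m • α = α := by
      intro i j hlt he
      refine ⟨j - i, by omega, ?_⟩
      have hj : h ^ j = h ^ i * h ^ (j - i) := by
        rw [← pow_add]
        congr 1
        omega
      rw [hj, mul_smul] at he
      exact (smul_left_cancel_iff _).mp he.symm
    obtain ⟨m, hm1, hm⟩ : ∃ m : ℕ, 1 ≤ m ∧ h ^ m • α = α := by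
      rcases lt_or_gt_of_ne hij with hlt | hlt
      · exact hmain i j hlt heq
      · exact hmain j i hlt heq.symm
    rw [Subgroup.mem_normalizer_iff]
    intro n
    constructor
    · intro hn
      have h1 : h ^ m * n * (h ^ m)⁻¹ ∈ K := by
        refine (hmemK _).mpr ⟨hN.conj_mem n ((hmemK n).mp hn).1 (h ^ m), ?_⟩
        have hinv : (h ^ m)⁻¹ • α = α := by
          rw [inv_smul_eq_iff, hm]
        rw [mul_smul, mul_smul, hinv, ((hmemK n).mp hn).2, hm]
      have h2 := hC (m - 1) _ h1
      obtain ⟨k, rfl⟩ : ∃ k, m = k + 1 := ⟨m - 1, by omega⟩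
      have heq2 : (h ^ (k + 1 - 1))⁻¹ * (h ^ (k + 1) * n * (h ^ (k + 1))⁻¹) * h ^ (k + 1 - 1)
          = h * n * h⁻¹ := by
        have : k + 1 - 1 = k := by omega
        rw [this, pow_succ]
        group
      rwa [heq2] at h2
    · intro hn
      have h2 := hB _ hn
      have heq2 : h⁻¹ * (h * n * h⁻¹) * h = n := by group
      rwa [heq2] at h2
  -- normalizer elements preserve F
  have hA : ∀ g ∈ (Subgroup.normalizer (K : Set G)), ∀ x ∈ F, g • x ∈ F := by
    intro g hg x hx
    rw [hmemF]
    intro n hn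
    have hg' : g⁻¹ ∈ (Subgroup.normalizer (K : Set G)) := (Subgroup.normalizer (K : Set G)).inv_mem hg
    have hconj : g⁻¹ * n * g ∈ K := by
      have := (Subgroup.mem_normalizer_iff.mp hg' n).mp hn
      simpa using this
    have hfix : (g⁻¹ * n * g) • x = x := (hmemF x).mp hx _ hconj
    calc n • g • x = (n * g) • x := by rw [mul_smul]
      _ = (g * (g⁻¹ * n * g)) • x := by congr 1; group
      _ = g • ((g⁻¹ * n * g) • x) := by rw [mul_smul]
      _ = g • x := by rw [hfix]
  have hEq : ∀ g ∈ (Subgroup.normalizer (K : Set G)), g • F = F := by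
    intro g hg
    apply Set.Subset.antisymm
    · rintro y ⟨x, hx, rfl⟩
      exact hA g hg x hx
    · intro y hy
      refine ⟨g⁻¹ • y, hA g⁻¹ ((Subgroup.normalizer (K : Set G)).inv_mem hg) y hy, ?_⟩
      simp
  constructor
  · intro g
    by_cases hdis : Disjoint (g • F) F
    · exact Or.inr hdis
    · left
      obtain ⟨z, hz1, hz2⟩ := Set.not_disjoint_iff.mp hdis
      obtain ⟨x, hx, rfl⟩ := hz1
      obtain ⟨hx', hx'eq⟩ := htrans.exists_smul_eq α x
      obtain ⟨hz', hz'eq⟩ := htrans.exists_smul_eq α (g • x)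
      have hx'n : hx' ∈ (Subgroup.normalizer (K : Set G)) := hnorm hx' (hx'eq ▸ hx)
      have hz'n : hz' ∈ (Subgroup.normalizer (K : Set G)) := hnorm hz' (hz'eq ▸ hz2)
      have hkα : (hz'⁻¹ * g * hx') • α = α := by
        rw [mul_smul, mul_smul, hx'eq, inv_smul_eq_iff, hz'eq]
      have hkn : hz'⁻¹ * g * hx' ∈ (Subgroup.normalizer (K : Set G)) := hnorm _ (by rw [hkα]; exact hαF)
      have hgn : g ∈ (Subgroup.normalizer (K : Set G)) := by
        have : hz' * (hz'⁻¹ * g * hx') * hx'⁻¹ ∈ (Subgroup.normalizer (K : Set G)) :=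
          (Subgroup.normalizer (K : Set G)).mul_mem ((Subgroup.normalizer (K : Set G)).mul_mem hz'n hkn) ((Subgroup.normalizer (K : Set G)).inv_mem hx'n)
        have heq3 : hz' * (hz'⁻¹ * g * hx') * hx'⁻¹ = g := by group
        rwa [heq3] at this
      exact hEq g hgn
  · intro x hx y hy
    obtain ⟨hx', hx'eq⟩ := htrans.exists_smul_eq α x
    obtain ⟨hy', hy'eq⟩ := htrans.exists_smul_eq α y
    have hx'n : hx' ∈ (Subgroup.normalizer (K : Set G)) := hnorm hx' (hx'eq ▸ hx)
    have hy'n : hy' ∈ (Subgroup.normalizer (K : Set G)) := hnorm hy' (hy'eq ▸ hy)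
    refine ⟨hy' * hx'⁻¹, (Subgroup.normalizer (K : Set G)).mul_mem hy'n ((Subgroup.normalizer (K : Set G)).inv_mem hx'n), ?_⟩
    rw [mul_smul, ← hx'eq, inv_smul_smul, hy'eq]
end

section
/- Let d, b be positive integers and let S be a finite set of positive integers each less than d, with s = Σ_{i∈S} d_i for given positive integers d_i. Suppose a group G acts t-transitively on a set of d classes and transitively on a set of b lines, where each line determines exactly s classes 'marked' by it (i.e., meeting it in a size belonging to S). Then for every h ≤ min(t, s), the product ∏_{j=0}^{h-1}(d-j) divides b·∏_{j=0}^{h-1}(s-j). -/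
open Finset

theorem stmt_19 {G Classes Lines : Type*} [Group G]
    [Fintype Classes] [Fintype Lines] [DecidableEq Classes]
    [MulAction G Classes] [MulAction G Lines]
    (d b t s : ℕ)
    (hd : Fintype.card Classes = d) (hb : Fintype.card Lines = b)
    (S : Finset ℕ) (d_ : ℕ → ℕ) (hS : ∀ i ∈ S, 0 < i ∧ i < d)
    (hs : s = ∑ i ∈ S, d_ i)
    (hLtrans : MulAction.IsPretransitive G Lines)
    (hCtrans : ∀ h : ℕ, h ≤ t → ∀ f₁ f₂ : Fin h → Classes,
      Function.Injective f₁ → Function.Injective f₂ →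
      ∃ g : G, ∀ i, g • f₁ i = f₂ i)
    (mark : Lines → Finset Classes)
    (hmark : ∀ (g : G) (l : Lines), mark (g • l) = (mark l).image (fun c => g • c))
    (hcard : ∀ l : Lines, (mark l).card = s) :
    ∀ h : ℕ, h ≤ min t s →
      (∏ j ∈ Finset.range h, (d - j)) ∣ b * ∏ j ∈ Finset.range h, (s - j) := by
  intro h hh
  classical
  have ht : h ≤ t := le_trans hh (min_le_left _ _)
  -- count of marked tuples per line
  have key1 : ∀ l : Lines,
      (Finset.univ.filter (fun f : Fin h ↪ Classes => ∀ i, f i ∈ mark l)).card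
        = Nat.descFactorial s h := by
    intro l
    have e : {f : Fin h ↪ Classes // ∀ i, f i ∈ mark l} ≃ (Fin h ↪ (mark l : Finset Classes)) :=
      { toFun := fun p => ⟨fun i => ⟨p.1 i, p.2 i⟩, fun i j hij =>
          p.1.injective (by simpa using congrArg Subtype.val hij)⟩
        invFun := fun f => ⟨f.trans (Function.Embedding.subtype _), fun i => (f i).2⟩
        left_inv := fun p => Subtype.ext (by ext i; rfl)
        right_inv := fun f => by ext i; rfl }
    calc (Finset.univ.filter (fun f : Fin h ↪ Classes => ∀ i, f i ∈ mark l)).card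
        = Fintype.card {f : Fin h ↪ Classes // ∀ i, f i ∈ mark l} :=
          (Fintype.card_subtype _).symm
      _ = Fintype.card (Fin h ↪ (mark l : Finset Classes)) := Fintype.card_congr e
      _ = Nat.descFactorial s h := by
          rw [Fintype.card_embedding_eq, Fintype.card_coe, Fintype.card_fin, hcard]
  -- count of lines per tuple is constant
  have key2 : ∀ f₁ f₂ : Fin h ↪ Classes,
      (Finset.univ.filter fun l : Lines => ∀ i, f₁ i ∈ mark l).card =
      (Finset.univ.filter fun l : Lines => ∀ i, f₂ i ∈ mark l).card := by
    intro f₁ f₂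
    obtain ⟨g, hg⟩ := hCtrans h ht f₁ f₂ f₁.injective f₂.injective
    apply Finset.card_bij (fun l _ => g • l)
    · intro l hl
      simp only [mem_filter, mem_univ, true_and] at hl ⊢
      intro i
      rw [← hg i, hmark]
      exact Finset.mem_image_of_mem _ (hl i)
    · intro l₁ _ l₂ _ hl
      exact smul_left_cancel g hl
    · intro l hl
      refine ⟨g⁻¹ • l, Finset.mem_filter.mpr ⟨Finset.mem_univ _, ?_⟩, by simp⟩
      intro i
      have h1 : f₂ i ∈ mark l := (Finset.mem_filter.mp hl).2 i
      have h2 : g • f₁ i ∈ mark (g • (g⁻¹ • l)) := by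
        rw [hg i, smul_inv_smul]; exact h1
      rw [hmark] at h2
      obtain ⟨c, hc, hcc⟩ := Finset.mem_image.mp h2
      rwa [← MulAction.injective g hcc]
  -- double counting
  have count :
      ∑ l : Lines, (Finset.univ.filter fun f : Fin h ↪ Classes => ∀ i, f i ∈ mark l).card
      = ∑ f : Fin h ↪ Classes, (Finset.univ.filter fun l : Lines => ∀ i, f i ∈ mark l).card := by
    simp only [Finset.card_filter]
    exact Finset.sum_comm
  have lhs : ∑ l : Lines, (Finset.univ.filter fun f : Fin h ↪ Classes => ∀ i, f i ∈ mark l).card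
      = b * Nat.descFactorial s h := by
    rw [Finset.sum_congr rfl (fun l _ => key1 l), Finset.sum_const, Finset.card_univ, hb,
      smul_eq_mul]
  have hdprod : (∏ j ∈ Finset.range h, (d - j)) = Nat.descFactorial d h :=
    (Nat.descFactorial_eq_prod_range d h).symm
  have hsprod : (∏ j ∈ Finset.range h, (s - j)) = Nat.descFactorial s h :=
    (Nat.descFactorial_eq_prod_range s h).symm
  rw [hdprod, hsprod]
  cases isEmpty_or_nonempty (Fin h ↪ Classes) with
  | inl hempty =>
      have hcard0 : Fintype.card (Fin h ↪ Classes) = 0 := Fintype.card_eq_zero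
      have hd0 : Nat.descFactorial d h = 0 := by
        rw [← hd, ← Fintype.card_fin h, ← Fintype.card_embedding_eq, hcard0]
      have : b * Nat.descFactorial s h = 0 := by
        rw [← lhs, count]
        simp
      rw [hd0, this]
  | inr hne =>
      obtain ⟨f₀⟩ := hne
      have rhs : ∑ f : Fin h ↪ Classes,
          (Finset.univ.filter fun l : Lines => ∀ i, f i ∈ mark l).card
          = Nat.descFactorial d h *
            (Finset.univ.filter fun l : Lines => ∀ i, f₀ i ∈ mark l).card := by
        rw [Finset.sum_congr rfl (fun f _ => key2 f f₀), Finset.sum_const, Finset.card_univ,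
          Fintype.card_embedding_eq, Fintype.card_fin, hd, smul_eq_mul]
      exact ⟨_, by rw [← lhs, count, rhs]⟩
end
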